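/- Let ρ : ℝ → ℝ be continuous, even, with ρ(0) = 0, non-decreasing on [0,∞), and strictly increasing on a neighbourhood [0, δ) of 0 (in the sense ρ(u) < ρ(v) whenever 0 ≤ u < v < δ). Let ε have a density g that is even, non-increasing in |t|, and strictly decreasing in |t| on a neighbourhood of 0. Then for Y = m + σ·ε with σ > 0, the function a ↦ E[ρ((Y − a)/σ)] attains its unique minimum at a = m. -/

import Mathlib

open MeasureTheory

/-- Key lemma: for `c > 0`, `∫ ρ(u) g(u) du < ∫ ρ(u - c) g(u) du`. -/
lemma key_shift (ρ : ℝ → ℝ) (g : ℝ → ℝ)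
    (hρeven : ∀ u, ρ (-u) = ρ u) (hρ0 : ρ 0 = 0)
    (hρmono : ∀ u v : ℝ, 0 ≤ u → u ≤ v → ρ u ≤ ρ v)
    (δ : ℝ) (hδ : 0 < δ)
    (hρstrict : ∀ u v : ℝ, 0 ≤ u → u < v → v < δ → ρ u < ρ v)
    (hgmono : ∀ s t : ℝ, |s| ≤ |t| → g t ≤ g s)
    (δ' : ℝ) (hδ' : 0 < δ')
    (hgstrict : ∀ s t : ℝ, |s| < |t| → |t| < δ' → g t < g s)
    (c : ℝ) (hc : 0 < c)
    (h0 : Integrable (fun u => ρ u * g u))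
    (h1 : Integrable (fun u => ρ (u - c) * g u)) :
    (∫ u, ρ u * g u) < ∫ u, ρ (u - c) * g u := by
  have hρabs : ∀ x : ℝ, ρ x = ρ |x| := by
    intro x
    rcases le_total 0 x with h | h
    · rw [abs_of_nonneg h]
    · rw [abs_of_nonpos h, ← hρeven x]
  have hρmono' : ∀ x y : ℝ, |x| ≤ |y| → ρ x ≤ ρ y := by
    intro x y h
    rw [hρabs x, hρabs y]
    exact hρmono _ _ (abs_nonneg x) h
  have hgmono' : ∀ x y : ℝ, |x| ≤ |y| → g y ≤ g x := fun x y h => hgmono x y h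
  -- the symmetrized integrand
  set F : ℝ → ℝ := fun u => (ρ u - ρ (u - c)) * (g (c - u) - g u) with hF
  set f₁ : ℝ → ℝ := fun u => ρ (u - c) * g u
  set f₀ : ℝ → ℝ := fun u => ρ u * g u
  -- pointwise identity
  have hFeq : F = fun u => (f₁ u - f₀ u) + ((fun v => f₁ v - f₀ v) (c - u)) := by
    funext u
    have e1 : ρ (c - u - c) = ρ u := by rw [show c - u - c = -u by ring, hρeven]
    have e2 : ρ (c - u) = ρ (u - c) := by rw [show c - u = -(u - c) by ring, hρeven]
    simp only [F, f₁, f₀]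
    rw [e1, e2]; ring
  -- F is nonnegative
  have hFnonneg : ∀ u, 0 ≤ F u := by
    intro u
    rcases le_total u (c / 2) with h | h
    · -- both factors nonpositive
      have h1' : |u| ≤ |u - c| := by
        have : |u - c| = c - u := by
          rw [abs_of_nonpos (by linarith)]; ring
        rw [this]
        exact abs_le.mpr ⟨by linarith, by linarith⟩
      have h2' : |c - u| = |u - c| := abs_sub_comm c u
      have hρle : ρ u ≤ ρ (u - c) := hρmono' _ _ h1'
      have hgle : g (c - u) ≤ g u := hgmono' _ _ (by rw [h2']; exact h1')
      have hprod : 0 ≤ (ρ (u - c) - ρ u) * (g u - g (c - u)) :=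
        mul_nonneg (by linarith) (by linarith)
      have : F u = (ρ (u - c) - ρ u) * (g u - g (c - u)) := by
        simp only [F]; ring
      linarith [this ▸ hprod]
    · -- both factors nonnegative
      have h1' : |u - c| ≤ |u| := by
        have : |u| = u := abs_of_nonneg (by linarith)
        rw [this]
        exact abs_le.mpr ⟨by linarith, by linarith⟩
      have h2' : |c - u| = |u - c| := abs_sub_comm c u
      have hρle : ρ (u - c) ≤ ρ u := hρmono' _ _ h1'
      have hgle : g u ≤ g (c - u) := hgmono' _ _ (by rw [h2']; exact h1')
      exact mul_nonneg (by linarith) (by linarith)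
  -- the small radius
  set r : ℝ := min (min δ δ') c with hr
  have hr0 : 0 < r := lt_min (lt_min hδ hδ') hc
  have hrδ : r ≤ δ := le_trans (min_le_left _ _) (min_le_left _ _)
  have hrδ' : r ≤ δ' := le_trans (min_le_left _ _) (min_le_right _ _)
  have hrc : r ≤ c := min_le_right _ _
  set ε₀ : ℝ := (ρ (3 * r / 4) - ρ (r / 2)) * (g (r / 2) - g (3 * r / 4)) with hε₀
  have hε₀pos : 0 < ε₀ := by
    apply mul_pos
    · have := hρstrict (r / 2) (3 * r / 4) (by linarith) (by linarith) (by linarith)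
      linarith
    · have := hgstrict (r / 2) (3 * r / 4)
        (by rw [abs_of_nonneg (by linarith), abs_of_nonneg (by linarith)]; linarith)
        (by rw [abs_of_nonneg (by linarith)]; linarith)
      linarith
  -- lower bound on the interval I
  set I : Set ℝ := Set.Ioo (c + r / 4) (c + r / 2) with hI
  have hIlower : ∀ u ∈ I, ε₀ ≤ F u := by
    intro u hu
    obtain ⟨hu1, hu2⟩ := hu
    have huc1 : r / 4 < u - c := by linarith
    have huc2 : u - c < r / 2 := by linarith
    have hρ1 : ρ (u - c) ≤ ρ (r / 2) := hρmono _ _ (by linarith) (by linarith)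
    have hρ2 : ρ (3 * r / 4) ≤ ρ u := hρmono _ _ (by linarith) (by linarith)
    have hg1 : g (r / 2) ≤ g (c - u) := by
      apply hgmono
      rw [abs_of_nonpos (by linarith), abs_of_nonneg (by linarith)]
      linarith
    have hg2 : g u ≤ g (3 * r / 4) := by
      apply hgmono
      rw [abs_of_nonneg (by linarith), abs_of_nonneg (by linarith)]
      linarith
    have hB : 0 < g (r / 2) - g (3 * r / 4) := by
      have := hgstrict (r / 2) (3 * r / 4)
        (by rw [abs_of_nonneg (by linarith), abs_of_nonneg (by linarith)]; linarith)
        (by rw [abs_of_nonneg (by linarith)]; linarith)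
      linarith
    have hA : 0 ≤ ρ u - ρ (u - c) := by
      have := hρstrict (r / 2) (3 * r / 4) (by linarith) (by linarith) (by linarith)
      linarith
    calc ε₀ = (ρ (3 * r / 4) - ρ (r / 2)) * (g (r / 2) - g (3 * r / 4)) := rfl
      _ ≤ (ρ u - ρ (u - c)) * (g (c - u) - g u) := by
          apply mul_le_mul (by linarith) (by linarith) (le_of_lt hB) hA
      _ = F u := rfl
  -- integrability of F
  have hsub : Integrable (fun u => f₁ u - f₀ u) := h1.sub h0
  have hcomp : Integrable (fun u => (fun v => f₁ v - f₀ v) (c - u)) :=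
    (integrable_comp_sub_left (fun v => f₁ v - f₀ v) c).mpr hsub
  have hFint : Integrable F := by
    rw [hFeq]; exact hsub.add hcomp
  -- ∫ F = 2 * (∫ f₁ - ∫ f₀)
  have hFint_eq : (∫ u, F u) = 2 * ((∫ u, f₁ u) - ∫ u, f₀ u) := by
    rw [hFeq, integral_add hsub hcomp,
      integral_sub_left_eq_self (fun v => f₁ v - f₀ v) volume c,
      integral_sub h1 h0]
    ring
  -- the indicator lower bound
  have hIind : Integrable (I.indicator fun _ => ε₀) := by
    rw [integrable_indicator_iff measurableSet_Ioo]
    exact integrableOn_const measure_Ioo_lt_top.ne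
  have hle : ∀ u, (I.indicator fun _ => ε₀) u ≤ F u := by
    intro u
    by_cases hu : u ∈ I
    · rw [Set.indicator_of_mem hu]; exact hIlower u hu
    · rw [Set.indicator_of_notMem hu]; exact hFnonneg u
  have hintle : ε₀ * (r / 4) ≤ ∫ u, F u := by
    have h1' : (∫ u, (I.indicator fun _ => ε₀) u) ≤ ∫ u, F u :=
      integral_mono hIind hFint hle
    have h2' : (∫ u, (I.indicator fun _ => ε₀) u) = ε₀ * (r / 4) := by
      rw [integral_indicator_const (ε₀ : ℝ) measurableSet_Ioo]
      rw [measureReal_def, Real.volume_Ioo]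
      rw [show c + r / 2 - (c + r / 4) = r / 4 by ring]
      rw [ENNReal.toReal_ofReal (by linarith)]
      rw [smul_eq_mul]; ring
    linarith
  have : 0 < (∫ u, f₁ u) - ∫ u, f₀ u := by
    have hpos : 0 < ε₀ * (r / 4) := mul_pos hε₀pos (by linarith)
    nlinarith [hintle, hFint_eq]
  linarith

/-- For a ρ-function ρ (continuous, even, ρ(0)=0, non-decreasing on [0,∞), strictly
increasing near 0) and an error ε with an even density g that is non-increasing in |t| and
strictly decreasing in |t| near 0, the function a ↦ E[ρ((Y − a)/σ)], with Y = m + σε,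
attains its unique minimum at a = m. -/
theorem stmt_1 (ρ : ℝ → ℝ) (g : ℝ → ℝ) (m σ : ℝ) (hσ : 0 < σ)
    (hρcont : Continuous ρ) (hρeven : ∀ u, ρ (-u) = ρ u) (hρ0 : ρ 0 = 0)
    (hρmono : ∀ u v : ℝ, 0 ≤ u → u ≤ v → ρ u ≤ ρ v)
    (δ : ℝ) (hδ : 0 < δ)
    (hρstrict : ∀ u v : ℝ, 0 ≤ u → u < v → v < δ → ρ u < ρ v)
    (hg : ∀ t, 0 ≤ g t) (hgmeas : Measurable g)
    (hgdens : ∫ t, g t = 1)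
    (hgeven : ∀ t, g (-t) = g t)
    (hgmono : ∀ s t : ℝ, |s| ≤ |t| → g t ≤ g s)
    (δ' : ℝ) (hδ' : 0 < δ')
    (hgstrict : ∀ s t : ℝ, |s| < |t| → |t| < δ' → g t < g s)
    (hint : ∀ a : ℝ, Integrable (fun u => ρ ((m + σ * u - a) / σ) * g u)) :
    ∀ a : ℝ, a ≠ m →
      (∫ u, ρ ((m + σ * u - m) / σ) * g u) < ∫ u, ρ ((m + σ * u - a) / σ) * g u := by
  intro a ha
  have hσ' : σ ≠ 0 := ne_of_gt hσ
  set c : ℝ := (a - m) / σ with hc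
  have hc0 : c ≠ 0 := div_ne_zero (sub_ne_zero.mpr ha) hσ'
  -- rewrite the integrands
  have hfun0 : (fun u : ℝ => ρ ((m + σ * u - m) / σ) * g u) = fun u => ρ u * g u := by
    funext u
    congr 1
    congr 1
    field_simp
    ring
  have hfuna : (fun u : ℝ => ρ ((m + σ * u - a) / σ) * g u) = fun u => ρ (u - c) * g u := by
    funext u
    congr 1
    congr 1
    rw [hc]
    field_simp
    ring
  -- general integrability after shift
  have hint' : ∀ d : ℝ, Integrable (fun u => ρ (u - d) * g u) := by
    intro d
    have h := hint (m + σ * d)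
    have heq : (fun u : ℝ => ρ ((m + σ * u - (m + σ * d)) / σ) * g u)
        = fun u => ρ (u - d) * g u := by
      funext u
      congr 1
      congr 1
      field_simp
      ring
    rwa [heq] at h
  have h0 : Integrable (fun u : ℝ => ρ u * g u) := by
    have := hint' 0
    simpa using this
  rw [hfun0, hfuna]
  rcases lt_or_gt_of_ne hc0 with hneg | hpos
  · -- c < 0 : use symmetry to reduce to -c > 0
    have hswap : (∫ u, ρ (u - c) * g u) = ∫ u, ρ (u - (-c)) * g u := by
      have := integral_neg_eq_self (fun u => ρ (u - (-c)) * g u) volume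
      have heq : (fun u : ℝ => ρ (-u - (-c)) * g (-u)) = fun u => ρ (u - c) * g u := by
        funext u
        rw [show -u - (-c) = -(u - c) by ring, hρeven, hgeven]
      rw [← this]
      rw [show (fun u : ℝ => (fun v : ℝ => ρ (v - (-c)) * g v) (-u))
          = fun u : ℝ => ρ (-u - (-c)) * g (-u) from rfl, heq]
    rw [hswap]
    exact key_shift ρ g hρeven hρ0 hρmono δ hδ hρstrict hgmono δ' hδ' hgstrict
      (-c) (by linarith) h0 (hint' (-c))
  · exact key_shift ρ g hρeven hρ0 hρmono δ hδ hρstrict hgmono δ' hδ' hgstrict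
      c hpos h0 (hint' c)
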